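/- In the setup below, let ξ, η ∈ C_c(G), let K₁, K₂ ⊆ G be compact sets such that ξ(g⁻¹h)·η(h) = 0 whenever (g,h) ∉ K₁ × K₂, and let D > 0 satisfy d(g,h) + d(e,h) + Δ(g)^{−1/2} ≤ D for all (g,h) ∈ K₁ × K₂. Let T be a bounded operator on ℓ²(Z) of finite propagation, and let N > 0 and ε₀ > 0 be such that |T_{z,w}| ≤ ε₀ for all z,w ∈ Z with d(e,z) > N and d(e,w) > N. Then for every x ∈ G with d(e,x) > N + D + δ/4, |∫_G ∫_G ξ(g⁻¹h) · conj(η(h)) · T̂_g(xh⁻¹) dμ(g) dμ(h)| ≤ ε₀ · D · ‖ξ‖_∞ · ‖η‖_∞ · μ(K₁) · μ(K₂) · ‖φ‖_∞². -/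

import Mathlib

open MeasureTheory Metric Bornology Filter Topology
open scoped ENNReal BoundedContinuousFunction

noncomputable section

/-- `ℓ²(X)` over `ℂ`. -/
abbrev l2 (X : Type*) : Type _ := lp (fun _ : X => ℂ) 2

/-- The standard basis vector `δ_x` of `ℓ²(X)`. -/
def delta {X : Type*} (x : X) : l2 X := by classical exact lp.single 2 x 1

/-- The matrix entry `a_{x,y} = ⟨a δ_y, δ_x⟩` of a bounded operator on `ℓ²(X)`. -/
def entry {X : Type*} (a : l2 X →L[ℂ] l2 X) (x y : X) : ℂ := inner ℂ (delta x) (a (delta y))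

/-- `d` is a proper left-invariant metric on the topological group `G` that induces
(is compatible with) its topology. -/
structure IsProperLeftInvariantCompatibleMetric (G : Type*) [Group G] [TopologicalSpace G]
    (d : G → G → ℝ) : Prop where
  refl : ∀ x, d x x = 0
  eq_of : ∀ {x y}, d x y = 0 → x = y
  symm : ∀ x y, d x y = d y x
  triangle : ∀ x y z, d x z ≤ d x y + d y z
  left_invariant : ∀ g x y, d (g * x) (g * y) = d x y
  compatible : ∀ s : Set G, IsOpen s ↔ ∀ x ∈ s, ∃ ε > 0, ∀ y, d x y < ε → y ∈ s
  proper : ∀ (x : G) (r : ℝ), IsCompact {y : G | d x y ≤ r}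

/-- The kernel `T̂` associated to a finite propagation operator `T` on `ℓ²(Z)`:
`T̂_y(x) = ∑_{z,w ∈ Z} φ_z(x) φ_w(xy) T_{z,w} Δ(y)^{-1/2}`, where `φ_z(g) = φ(z⁻¹g)`. -/
def hatT {G : Type*} [Group G] (Δ : G → ℝ) (φ : G → ℝ) (Z : Set G)
    (T : l2 Z →L[ℂ] l2 Z) (y x : G) : ℂ :=
  ∑' (z : Z) (w : Z),
    ((φ ((z : G)⁻¹ * x) : ℝ) : ℂ) * ((φ ((w : G)⁻¹ * (x * y)) : ℝ) : ℂ) * entry T z w *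
      (((Δ y ^ (-(1/2) : ℝ) : ℝ)) : ℂ)

/-- The key slice-map estimate: far from the identity, the slice of
`Φ(T)` against compactly supported `ξ, η` is bounded by
`ε₀ · D · ‖ξ‖_∞ · ‖η‖_∞ · μ(K₁) · μ(K₂) · ‖φ‖_∞²`. -/
theorem slice_map_estimate
    (G : Type*) [Group G] [TopologicalSpace G] [IsTopologicalGroup G]
    [LocallyCompactSpace G] [SecondCountableTopology G] [T2Space G]
    [MeasurableSpace G] [BorelSpace G]
    (μ : Measure G) [μ.IsHaarMeasure]
    (Δ : G → ℝ) (hΔpos : ∀ y : G, 0 < Δ y)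
    (hΔ : ∀ y : G, Measure.map (fun x => x * y) μ = ENNReal.ofReal (Δ y)⁻¹ • μ)
    (d : G → G → ℝ) (hd : IsProperLeftInvariantCompatibleMetric G d)
    (Z : Set G)
    (hZulf : ∀ S > (0:ℝ), ∃ N : ℕ, ∀ z ∈ Z,
      {x ∈ Z | d z x ≤ S}.Finite ∧ {x ∈ Z | d z x ≤ S}.ncard ≤ N)
    (δ : ℝ) (hδpos : 0 < δ)
    (hsep : ∀ z ∈ Z, ∀ w ∈ Z, z ≠ w → δ ≤ d z w)
    (hlat : ∃ R > (0:ℝ), ∀ x : G, ∃ z ∈ Z, d z x ≤ R)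
    (φ : G → ℝ) (hφcont : Continuous φ) (hφnn : ∀ g : G, 0 ≤ φ g)
    (hφsupp : ∀ g : G, δ / 4 < d 1 g → φ g = 0)
    (hφnorm : ∫ g, φ g ^ 2 ∂μ = 1)
    (ξ η : G → ℂ) (hξcont : Continuous ξ) (hξsupp : HasCompactSupport ξ)
    (hηcont : Continuous η) (hηsupp : HasCompactSupport η)
    (K₁ K₂ : Set G) (hK₁ : IsCompact K₁) (hK₂ : IsCompact K₂)
    (hKsupp : ∀ g h : G, (g, h) ∉ K₁ ×ˢ K₂ → ξ (g⁻¹ * h) * η h = 0)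
    (D : ℝ) (hD : 0 < D)
    (hDbound : ∀ g ∈ K₁, ∀ h ∈ K₂, d g h + d 1 h + Δ g ^ (-(1/2) : ℝ) ≤ D)
    (T : l2 Z →L[ℂ] l2 Z) (P : ℝ) (hP : 0 ≤ P)
    (hT : ∀ z w : Z, P < d z w → entry T z w = 0)
    (N : ℝ) (hN : 0 < N) (ε₀ : ℝ) (hε₀ : 0 < ε₀)
    (hTsmall : ∀ z w : Z, N < d 1 z → N < d 1 w → ‖entry T z w‖ ≤ ε₀)
    (Cξ Cη Cφ : ℝ) (hCξ : ∀ g : G, ‖ξ g‖ ≤ Cξ) (hCη : ∀ g : G, ‖η g‖ ≤ Cη)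
    (hCφ : ∀ g : G, φ g ≤ Cφ) :
    ∀ x : G, N + D + δ / 4 < d 1 x →
      ‖∫ h, ∫ g, ξ (g⁻¹ * h) * (starRingEnd ℂ) (η h) * hatT Δ φ Z T g (x * h⁻¹) ∂μ ∂μ‖ ≤
        ε₀ * D * Cξ * Cη * (μ K₁).toReal * (μ K₂).toReal * Cφ ^ 2 := by
  intro x hx
  -- basic facts about d
  have dnn : ∀ a b : G, 0 ≤ d a b := by
    intro a b
    have h1 := hd.triangle a b a
    have h2 := hd.refl a
    have h3 := hd.symm b a
    linarith
  have dinv : ∀ a b : G, d a b = d 1 (a⁻¹ * b) := by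
    intro a b
    have h := hd.left_invariant a⁻¹ a b
    simpa using h.symm
  have hCφ0 : 0 ≤ Cφ := le_trans (hφnn 1) (hCφ 1)
  have hCξ0 : 0 ≤ Cξ := le_trans (norm_nonneg _) (hCξ 1)
  have hCη0 : 0 ≤ Cη := le_trans (norm_nonneg _) (hCη 1)
  -- support of φ
  have hnear : ∀ (u : G) (z : G), φ (z⁻¹ * u) ≠ 0 → d z u ≤ δ / 4 := by
    intro u z hz
    by_contra hlt
    push_neg at hlt
    refine hz (hφsupp _ ?_)
    rw [← dinv]; exact hlt
  -- uniqueness of the lattice point near a given point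
  have huniqgen : ∀ (u : G) (z w : Z), φ ((z : G)⁻¹ * u) ≠ 0 → φ ((w : G)⁻¹ * u) ≠ 0 →
      z = w := by
    intro u z w hz hw
    by_contra hne
    have h1 := hnear u z hz
    have h2 := hnear u w hw
    have h3 : δ ≤ d (z : G) (w : G) :=
      hsep z z.2 w w.2 (fun hzw => hne (Subtype.ext hzw))
    have h4 := hd.triangle (z : G) u (w : G)
    have h5 := hd.symm u (w : G)
    linarith
  -- the key bound on hatT
  have hatT_bd : ∀ (u y : G),
      (∀ z w : Z, φ ((z : G)⁻¹ * u) ≠ 0 → φ ((w : G)⁻¹ * (u * y)) ≠ 0 →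
        ‖entry T z w‖ ≤ ε₀) →
      ‖hatT Δ φ Z T y u‖ ≤ ε₀ * Cφ ^ 2 * Δ y ^ (-(1/2) : ℝ) := by
    intro u y hsm
    have hRnn : (0:ℝ) ≤ Δ y ^ (-(1/2) : ℝ) := Real.rpow_nonneg (hΔpos y).le _
    have hRHSnn : (0:ℝ) ≤ ε₀ * Cφ ^ 2 * Δ y ^ (-(1/2) : ℝ) :=
      mul_nonneg (mul_nonneg hε₀.le (sq_nonneg Cφ)) hRnn
    by_cases hz : ∃ z : Z, φ ((z : G)⁻¹ * u) ≠ 0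
    · by_cases hw : ∃ w : Z, φ ((w : G)⁻¹ * (u * y)) ≠ 0
      · obtain ⟨z₀, hz₀⟩ := hz
        obtain ⟨w₀, hw₀⟩ := hw
        have heq : hatT Δ φ Z T y u =
            ((φ ((z₀ : G)⁻¹ * u) : ℝ) : ℂ) * ((φ ((w₀ : G)⁻¹ * (u * y)) : ℝ) : ℂ) *
              entry T z₀ w₀ * (((Δ y ^ (-(1/2) : ℝ) : ℝ)) : ℂ) := by
          unfold hatT
          rw [tsum_eq_single z₀ ?_, tsum_eq_single w₀ ?_]
          · intro w' hw'
            have h0 : φ ((w' : G)⁻¹ * (u * y)) = 0 := by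
              by_contra hc; exact hw' (huniqgen _ w' w₀ hc hw₀)
            simp [h0]
          · intro z' hz'
            have h0 : φ ((z' : G)⁻¹ * u) = 0 := by
              by_contra hc; exact hz' (huniqgen _ z' z₀ hc hz₀)
            simp [h0]
        rw [heq]
        rw [norm_mul, norm_mul, norm_mul, Complex.norm_real, Complex.norm_real,
          Complex.norm_real, Real.norm_eq_abs, Real.norm_eq_abs, Real.norm_eq_abs,
          abs_of_nonneg (hφnn _), abs_of_nonneg (hφnn _), abs_of_nonneg hRnn]
        calc φ ((z₀ : G)⁻¹ * u) * φ ((w₀ : G)⁻¹ * (u * y)) * ‖entry T z₀ w₀‖ *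
              Δ y ^ (-(1/2) : ℝ)
            ≤ Cφ * Cφ * ε₀ * Δ y ^ (-(1/2) : ℝ) := by
              refine mul_le_mul_of_nonneg_right ?_ hRnn
              refine mul_le_mul ?_ (hsm z₀ w₀ hz₀ hw₀) (norm_nonneg _)
                (mul_nonneg hCφ0 hCφ0)
              exact mul_le_mul (hCφ _) (hCφ _) (hφnn _) hCφ0
          _ = ε₀ * Cφ ^ 2 * Δ y ^ (-(1/2) : ℝ) := by ring
      · push_neg at hw
        have h0 : hatT Δ φ Z T y u = 0 := by
          unfold hatT
          have h1 : ∀ z : Z, (∑' w : Z,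
              ((φ ((z : G)⁻¹ * u) : ℝ) : ℂ) * ((φ ((w : G)⁻¹ * (u * y)) : ℝ) : ℂ) *
                entry T z w * (((Δ y ^ (-(1/2) : ℝ) : ℝ)) : ℂ)) = 0 := by
            intro z
            have h2 : ∀ w : Z,
                ((φ ((z : G)⁻¹ * u) : ℝ) : ℂ) * ((φ ((w : G)⁻¹ * (u * y)) : ℝ) : ℂ) *
                  entry T z w * (((Δ y ^ (-(1/2) : ℝ) : ℝ)) : ℂ) = 0 := by
              intro w; simp [hw w]
            rw [tsum_congr h2, tsum_zero]
          rw [tsum_congr h1, tsum_zero]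
        rw [h0, norm_zero]; exact hRHSnn
    · push_neg at hz
      have h0 : hatT Δ φ Z T y u = 0 := by
        unfold hatT
        have h1 : ∀ z : Z, (∑' w : Z,
            ((φ ((z : G)⁻¹ * u) : ℝ) : ℂ) * ((φ ((w : G)⁻¹ * (u * y)) : ℝ) : ℂ) *
              entry T z w * (((Δ y ^ (-(1/2) : ℝ) : ℝ)) : ℂ)) = 0 := by
          intro z
          have h2 : ∀ w : Z,
              ((φ ((z : G)⁻¹ * u) : ℝ) : ℂ) * ((φ ((w : G)⁻¹ * (u * y)) : ℝ) : ℂ) *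
                entry T z w * (((Δ y ^ (-(1/2) : ℝ) : ℝ)) : ℂ) = 0 := by
            intro w; simp [hz z]
          rw [tsum_congr h2, tsum_zero]
        rw [tsum_congr h1, tsum_zero]
      rw [h0, norm_zero]; exact hRHSnn
  set C₁ : ℝ := Cξ * Cη * (ε₀ * Cφ ^ 2 * D) with hC₁
  have hC₁0 : 0 ≤ C₁ := by
    have : (0:ℝ) ≤ ε₀ * Cφ ^ 2 * D := mul_nonneg (mul_nonneg hε₀.le (sq_nonneg Cφ)) hD.le
    exact mul_nonneg (mul_nonneg hCξ0 hCη0) this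
  -- pointwise bound on the integrand for (g, h) ∈ K₁ × K₂
  have key : ∀ h ∈ K₂, ∀ g ∈ K₁,
      ‖ξ (g⁻¹ * h) * (starRingEnd ℂ) (η h) * hatT Δ φ Z T g (x * h⁻¹)‖ ≤ C₁ := by
    intro h hh g hg
    have hDg := hDbound g hg h hh
    have hΔnn : (0:ℝ) ≤ Δ g ^ (-(1/2) : ℝ) := Real.rpow_nonneg (hΔpos g).le _
    have hΔD : Δ g ^ (-(1/2) : ℝ) ≤ D := by
      have := dnn g h; have := dnn 1 h; linarith
    have hdgh : d g h ≤ D := by have := dnn 1 h; linarith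
    have hd1h : d 1 h ≤ D := by have := dnn g h; linarith
    have e1 : d (x * h⁻¹) x = d 1 h := by
      have a := hd.left_invariant x h⁻¹ 1
      have b := hd.left_invariant h h⁻¹ 1
      simp only [mul_one, mul_inv_cancel] at a b
      rw [a, ← b]
    have e2 : d x (x * h⁻¹ * g) = d g h := by
      have a := hd.left_invariant x 1 (h⁻¹ * g)
      have b := hd.left_invariant h 1 (h⁻¹ * g)
      simp only [mul_one] at a b
      have hb : h * (h⁻¹ * g) = g := by group
      rw [hb] at b
      rw [mul_assoc, a, ← b, hd.symm h g]
    -- smallness hypothesis for hatT_bd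
    have hsm : ∀ z w : Z, φ ((z : G)⁻¹ * (x * h⁻¹)) ≠ 0 →
        φ ((w : G)⁻¹ * (x * h⁻¹ * g)) ≠ 0 → ‖entry T z w‖ ≤ ε₀ := by
      intro z w hzφ hwφ
      have hnz := hnear (x * h⁻¹) (z : G) hzφ
      have hnw := hnear (x * h⁻¹ * g) (w : G) hwφ
      have t1 := hd.triangle 1 (x * h⁻¹) x
      have t2 := hd.triangle 1 (z : G) (x * h⁻¹)
      have t3 := hd.triangle 1 (x * h⁻¹ * g) x
      have t4 := hd.triangle 1 (w : G) (x * h⁻¹ * g)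
      have s1 := hd.symm (x * h⁻¹) x
      have s2 := hd.symm (x * h⁻¹ * g) x
      have hz1 : N < d 1 (z : G) := by
        rw [e1] at t1
        linarith
      have hw1 : N < d 1 (w : G) := by
        rw [s2, e2] at t3
        linarith
      exact hTsmall z w hz1 hw1
    have hb := hatT_bd (x * h⁻¹) g hsm
    have hb' : ‖hatT Δ φ Z T g (x * h⁻¹)‖ ≤ ε₀ * Cφ ^ 2 * D :=
      le_trans hb (mul_le_mul_of_nonneg_left hΔD
        (mul_nonneg hε₀.le (sq_nonneg Cφ)))
    calc ‖ξ (g⁻¹ * h) * (starRingEnd ℂ) (η h) * hatT Δ φ Z T g (x * h⁻¹)‖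
        = ‖ξ (g⁻¹ * h)‖ * ‖(starRingEnd ℂ) (η h)‖ * ‖hatT Δ φ Z T g (x * h⁻¹)‖ := by
          rw [norm_mul, norm_mul]
      _ ≤ Cξ * Cη * (ε₀ * Cφ ^ 2 * D) := by
          refine mul_le_mul ?_ hb' (norm_nonneg _) (mul_nonneg hCξ0 hCη0)
          refine mul_le_mul (hCξ _) ?_ (norm_nonneg _) hCξ0
          rw [RCLike.norm_conj]; exact hCη h
  -- integrand vanishes off K₁ × K₂
  have hvanish : ∀ g h : G, (g, h) ∉ K₁ ×ˢ K₂ →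
      ξ (g⁻¹ * h) * (starRingEnd ℂ) (η h) * hatT Δ φ Z T g (x * h⁻¹) = 0 := by
    intro g h hgh
    rcases mul_eq_zero.mp (hKsupp g h hgh) with h' | h' <;> simp [h']
  -- inner integral bound for h ∈ K₂
  have inner_bd : ∀ h ∈ K₂,
      ‖∫ g, ξ (g⁻¹ * h) * (starRingEnd ℂ) (η h) * hatT Δ φ Z T g (x * h⁻¹) ∂μ‖ ≤
        C₁ * (μ K₁).toReal := by
    intro h hh
    have hint : Integrable (K₁.indicator fun _ => C₁) μ :=
      (integrable_indicator_iff hK₁.measurableSet).mpr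
        (integrableOn_const hK₁.measure_lt_top.ne)
    have hle : ‖∫ g, ξ (g⁻¹ * h) * (starRingEnd ℂ) (η h) * hatT Δ φ Z T g (x * h⁻¹) ∂μ‖ ≤
        ∫ g, K₁.indicator (fun _ => C₁) g ∂μ := by
      refine norm_integral_le_of_norm_le hint (Filter.Eventually.of_forall (fun g => ?_))
      by_cases hg : g ∈ K₁
      · rw [Set.indicator_of_mem hg]
        exact key h hh g hg
      · rw [Set.indicator_of_notMem hg,
          hvanish g h (by simp [hg]), norm_zero]
    rw [integral_indicator_const _ hK₁.measurableSet, smul_eq_mul] at hle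
    calc ‖∫ g, ξ (g⁻¹ * h) * (starRingEnd ℂ) (η h) * hatT Δ φ Z T g (x * h⁻¹) ∂μ‖
        ≤ (μ K₁).toReal * C₁ := hle
      _ = C₁ * (μ K₁).toReal := by ring
  -- outer integral bound
  have hint2 : Integrable (K₂.indicator fun _ => C₁ * (μ K₁).toReal) μ :=
    (integrable_indicator_iff hK₂.measurableSet).mpr
      (integrableOn_const hK₂.measure_lt_top.ne)
  have hle2 : ‖∫ h, ∫ g, ξ (g⁻¹ * h) * (starRingEnd ℂ) (η h) * hatT Δ φ Z T g (x * h⁻¹) ∂μ ∂μ‖ ≤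
      ∫ h, K₂.indicator (fun _ => C₁ * (μ K₁).toReal) h ∂μ := by
    refine norm_integral_le_of_norm_le hint2 (Filter.Eventually.of_forall (fun h => ?_))
    by_cases hh : h ∈ K₂
    · rw [Set.indicator_of_mem hh]
      exact inner_bd h hh
    · rw [Set.indicator_of_notMem hh]
      have hz : ∀ g : G, ξ (g⁻¹ * h) * (starRingEnd ℂ) (η h) * hatT Δ φ Z T g (x * h⁻¹) = 0 :=
        fun g => hvanish g h (by simp [hh])
      simp only [hz, integral_zero, norm_zero]
      exact le_refl 0
  rw [integral_indicator_const _ hK₂.measurableSet, smul_eq_mul] at hle2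
  calc ‖∫ h, ∫ g, ξ (g⁻¹ * h) * (starRingEnd ℂ) (η h) * hatT Δ φ Z T g (x * h⁻¹) ∂μ ∂μ‖
      ≤ (μ K₂).toReal * (C₁ * (μ K₁).toReal) := hle2
    _ = ε₀ * D * Cξ * Cη * (μ K₁).toReal * (μ K₂).toReal * Cφ ^ 2 := by
        rw [hC₁]; ring
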